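/- In the limiting problem q'' = q(1−q²) on (0,a) with q(0)=0, q'(0)=α>0 and |q|≤1, the solution q is strictly increasing as long as q < 1, and the field h₀* satisfying q(a)=1 is characterized by a = ∫₀¹ ( (h₀*)² − (1/2)(1−u²)² )^{−1/2} du, where (q')² = (h₀*)² − (1/2)(1−q²)² along the trajectory with q'(a)=h₀* at q(a)=1. -/

import Mathlib

open Set intervalIntegral Filter

theorem stmt_16 (a h : ℝ) (ha : 0 < a) (hh : 0 < h)
    (q : ℝ → ℝ) (hq2 : ContDiff ℝ 2 q)
    (hqeq : ∀ x ∈ Set.Ioo 0 a, deriv (deriv q) x = q x * (1 - (q x) ^ 2))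
    (hq0 : q 0 = 0)
    (hbound : ∀ x ∈ Set.Icc 0 a, 0 ≤ q x ∧ q x ≤ 1)
    (hqa : q a = 1) (hq'a : deriv q a = h)
    (hq'pos : ∀ x ∈ Set.Ico 0 a, 0 < deriv q x) :
    (∀ x ∈ Set.Icc 0 a, (deriv q x) ^ 2 = h ^ 2 - (1 / 2) * (1 - (q x) ^ 2) ^ 2) ∧
    a = ∫ u in (0 : ℝ)..1, 1 / Real.sqrt (h ^ 2 - (1 / 2) * (1 - u ^ 2) ^ 2) := by
  have hq2' : ContDiff ℝ (1 + 1 : ℕ) q := by exact_mod_cast hq2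
  have hdq : Differentiable ℝ q := hq2.differentiable (by norm_num)
  have hdq1 : ContDiff ℝ 1 (deriv q) := (contDiff_succ_iff_deriv.mp (by exact_mod_cast hq2 : ContDiff ℝ ((1:ℕ∞) + 1) q)).2.2
  have hdq'd : Differentiable ℝ (deriv q) := hdq1.differentiable one_ne_zero
  have hq''c : Continuous (deriv (deriv q)) := hdq1.continuous_deriv le_rfl
  set F : ℝ → ℝ := fun x => (deriv q x) ^ 2 + (1 - (q x) ^ 2) ^ 2 / 2 with hFdef
  set D : ℝ → ℝ := fun x =>
    2 * deriv q x * deriv (deriv q) x - 2 * (1 - (q x) ^ 2) * (q x * deriv q x) with hDdef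
  have hFderiv : ∀ x, HasDerivAt F (D x) x := by
    intro x
    have h1 : HasDerivAt (fun x => (deriv q x) ^ 2)
        (2 * deriv q x * deriv (deriv q) x) x := by
      simpa using ((hdq'd x).hasDerivAt).fun_pow 2
    have h2 : HasDerivAt (fun x => (1 - (q x) ^ 2) ^ 2 / 2)
        (2 * (1 - (q x) ^ 2) * (0 - 2 * q x * deriv q x) / 2) x := by
      have hi : HasDerivAt (fun x => 1 - (q x) ^ 2) (0 - 2 * q x * deriv q x) x := by
        simpa using (hasDerivAt_const x (1 : ℝ)).fun_sub (((hdq x).hasDerivAt).fun_pow 2)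
      simpa using (hi.pow 2).div_const 2
    have := h1.fun_add h2
    convert this using 1
    · rfl
    · rfl
    simp only [hDdef]
    ring
  have hDzero : ∀ x ∈ Ico 0 a, D x = 0 := by
    intro x hx
    rcases eq_or_lt_of_le hx.1 with h0 | h0
    · -- x = 0 : continuity argument
      have hDc : Continuous D := by
        apply Continuous.sub
        · exact (continuous_const.mul hdq'd.continuous).mul hq''c
        · exact (continuous_const.mul (continuous_const.sub ((hdq.continuous).pow 2))).mul
            ((hdq.continuous).mul hdq'd.continuous)
      have hzero : ∀ y ∈ Ioo (0:ℝ) a, D y = 0 := by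
        intro y hy
        simp only [hDdef, hqeq y hy]
        ring
      have t1 : Tendsto D (nhdsWithin 0 (Ioi 0)) (nhds (D 0)) :=
        (hDc.continuousAt).continuousWithinAt.tendsto
      have t2 : Tendsto D (nhdsWithin 0 (Ioi 0)) (nhds 0) := by
        refine Tendsto.congr' ?_ tendsto_const_nhds
        filter_upwards [Ioo_mem_nhdsGT_of_mem (Set.mem_Ico.mpr ⟨le_refl (0:ℝ), ha⟩)] with y hy
        exact (hzero y hy).symm
      have := tendsto_nhds_unique t1 t2
      rw [← h0]; exact this
    · have : x ∈ Ioo 0 a := ⟨h0, hx.2⟩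
      simp only [hDdef, hqeq x this]
      ring
  have hFconst : ∀ x ∈ Icc 0 a, F x = F 0 := by
    apply constant_of_has_deriv_right_zero
    · exact ((hdq'd.continuous.pow 2).add
        (((continuous_const.sub ((hdq.continuous).pow 2)).pow 2).div_const 2)).continuousOn
    · intro x hx
      have := (hFderiv x).hasDerivWithinAt (s := Ici x)
      rwa [hDzero x hx] at this
  have hFa : F a = h ^ 2 := by
    simp only [hFdef, hqa, hq'a]; ring
  have hF0 : F 0 = h ^ 2 := by
    rw [← hFa]
    exact (hFconst a (Set.mem_Icc.mpr ⟨ha.le, le_refl a⟩)).symm ▸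
      (hFconst a ⟨ha.le, le_refl a⟩)
  have part1 : ∀ x ∈ Icc 0 a, (deriv q x) ^ 2 = h ^ 2 - (1 / 2) * (1 - (q x) ^ 2) ^ 2 := by
    intro x hx
    have := hFconst x hx
    rw [hF0] at this
    simp only [hFdef] at this
    linarith
  refine ⟨part1, ?_⟩
  -- positivity of deriv q on the closed interval
  have hdpos : ∀ x ∈ Icc 0 a, 0 < deriv q x := by
    intro x hx
    rcases eq_or_lt_of_le hx.2 with h1 | h1
    · rw [h1, hq'a]; exact hh
    · exact hq'pos x ⟨hx.1, h1⟩
  -- positivity of denominator on [0,1]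
  have hpos : ∀ u ∈ Icc (0:ℝ) 1, 0 < h ^ 2 - (1 / 2) * (1 - u ^ 2) ^ 2 := by
    intro u hu
    have hsub : Icc (q 0) (q a) ⊆ q '' Icc 0 a :=
      intermediate_value_Icc ha.le (hdq.continuous.continuousOn)
    rw [hq0, hqa] at hsub
    obtain ⟨x, hx, hqx⟩ := hsub hu
    have h1 := part1 x hx
    rw [hqx] at h1
    have := hdpos x hx
    nlinarith
  set g : ℝ → ℝ := fun u => 1 / Real.sqrt (h ^ 2 - (1 / 2) * (1 - u ^ 2) ^ 2) with hgdef
  have hgcont : ContinuousOn g (Icc 0 1) := by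
    apply ContinuousOn.div continuousOn_const
    · exact (Real.continuous_sqrt.comp (by fun_prop)).continuousOn
    · intro u hu
      exact (Real.sqrt_pos.mpr (hpos u hu)).ne'
  have huIcc : uIcc (0:ℝ) a = Icc 0 a := uIcc_of_le ha.le
  have himg : q '' uIcc 0 a ⊆ Icc 0 1 := by
    rw [huIcc]
    rintro _ ⟨x, hx, rfl⟩
    exact ⟨(hbound x hx).1, (hbound x hx).2⟩
  have key : (∫ x in (0:ℝ)..a, deriv q x • (g ∘ q) x) = ∫ u in (q 0)..(q a), g u := by
    apply integral_comp_smul_deriv''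
    · exact hdq.continuous.continuousOn
    · intro x hx
      exact ((hdq x).hasDerivAt).hasDerivWithinAt
    · exact hdq'd.continuous.continuousOn
    · exact hgcont.mono himg
  have lhs1 : EqOn (fun x => deriv q x • (g ∘ q) x) (fun _ => (1:ℝ)) (uIcc (0:ℝ) a) := by
    intro x hx
    rw [huIcc] at hx
    have h1 := part1 x hx
    have h2 := hdpos x hx
    simp only [hgdef, Function.comp, smul_eq_mul, ← h1, Real.sqrt_sq h2.le]
    field_simp
  have lhs : (∫ x in (0:ℝ)..a, deriv q x • (g ∘ q) x) = a := by
    rw [intervalIntegral.integral_congr lhs1]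
    simp
  rw [lhs, hq0, hqa] at key
  exact key
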